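/- Let V carry an almost contact structure (φ, ξ, η) with φ² = −I + η ⊗ ξ, φξ = 0, η∘φ = 0, η(ξ) = 1, and let W carry a metallic structure J with J² = pJ + qI for positive reals p, q. If F : V → W is linear with F ∘ φ = J ∘ F, then F = 0. -/

import Mathlib

theorem almost_contact_to_metallic_constancy
    {V W : Type*} [AddCommGroup V] [Module ℝ V] [AddCommGroup W] [Module ℝ W]
    (F : V →ₗ[ℝ] W)
    (φ : V →ₗ[ℝ] V) (ξ : V) (η : V →ₗ[ℝ] ℝ)
    (J : W →ₗ[ℝ] W)
    (p q : ℝ) (hp : 0 < p) (hq : 0 < q)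
    (hφ2 : ∀ x : V, φ (φ x) = -x + η x • ξ)
    (hφξ : φ ξ = 0)
    (hηφ : ∀ x : V, η (φ x) = 0)
    (hηξ : η ξ = 1)
    (hJ : ∀ y : W, J (J y) = p • J y + q • y)
    (hF : ∀ x : V, F (φ x) = J (F x)) :
    F = 0 := by
  -- First, F ξ = 0
  have hJFξ : J (F ξ) = 0 := by
    have := hF ξ
    rw [hφξ] at this
    simpa using this.symm
  have hFξ : F ξ = 0 := by
    have h := hJ (F ξ)
    rw [hJFξ] at h
    simp only [map_zero, smul_zero, zero_add] at h
    rcases smul_eq_zero.mp h.symm with h' | h'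
    · exact absurd h' hq.ne'
    · exact h'
  ext x
  set a := F x with ha
  -- key relation: p • J a + q • a = -a
  have key : p • J a + q • a = -a := by
    have h1 : F (φ (φ x)) = J (J (F x)) := by rw [hF, hF]
    rw [hφ2 x, hJ] at h1
    simpa [hFξ, ha] using h1.symm
  set c : ℝ := -(1 + q) / p with hc
  have hb : J a = c • a := by
    have h1 : p • J a = (-(1 + q)) • a := by
      have : p • J a = -a - q • a := by
        rw [← key]; abel
      rw [this, sub_eq_add_neg, ← neg_smul, ← neg_one_smul ℝ a, ← add_smul]
      ring_nf
    have := congrArg (fun y => p⁻¹ • y) h1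
    simpa [smul_smul, inv_mul_cancel₀ hp.ne', hc, div_eq_inv_mul, mul_comm] using this
  have h2 : (c * c) • a = (p * c + q) • a := by
    have := hJ a
    rw [hb, map_smul, hb, smul_smul] at this
    rw [this, smul_smul, ← add_smul]
  have h3 : (c * c - (p * c + q)) • a = 0 := by
    rw [sub_smul, h2, sub_self]
  have hcoef : c * c - (p * c + q) ≠ 0 := by
    rw [hc]
    field_simp
    intro h
    rcases div_eq_zero_iff.mp h with h | h
    · nlinarith [sq_nonneg (1 + q), sq_nonneg p, hp]
    · exact absurd h (pow_ne_zero 2 hp.ne')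
  rcases smul_eq_zero.mp h3 with h' | h'
  · exact absurd h' hcoef
  · simpa using h'
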